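/- For n, h, k ≥ 1, let s(n,h,k) denote the number of semi-Baxter permutations of size n with label (h,k). Then s(1,1,1) = 1 and s(1,h,k) = 0 for (h,k) ≠ (1,1), and for all n ≥ 1 and all h, k ≥ 1: s(n+1, h, k) = Σ_{h' ≥ h} s(n, h', k−1) + Σ_{m=1}^{h−1} s(n, m, h+k−1−m), where s(n, ·, 0) is interpreted as 0. (This is the recurrence on label counts encoded by the succession rule Ω_semi of Proposition 3.2, under which the label (h,k) produces the labels (1,k+1),…,(h,k+1) and (h+k,1),…,(h+1,k).) -/

import Mathlib

/-- `f` contains the vincular pattern 2-41-3: there are positions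
`i < j` and `k > j+1` with `f (j+1) < f i < f k < f j`. -/
def Contains2413 {m : ℕ} (f : Fin m → Fin m) : Prop :=
  ∃ i j j' k : Fin m, (i : ℕ) < (j : ℕ) ∧ (j' : ℕ) = (j : ℕ) + 1 ∧ (j' : ℕ) < (k : ℕ) ∧
    f j' < f i ∧ f i < f k ∧ f k < f j

/-- A semi-Baxter permutation avoids 2-41-3. -/
def IsSemiBaxter {n : ℕ} (π : Equiv.Perm (Fin n)) : Prop := ¬ Contains2413 ⇑π

/-- The local expansion `π · a` on the right of `π` (with 0-indexed values):
the last entry is `a`, and the entry at position `i < n` is `π i` if `π i < a`,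
and `π i + 1` otherwise. -/
def insertFun {n : ℕ} (π : Equiv.Perm (Fin n)) (a : Fin (n + 1)) :
    Fin (n + 1) → Fin (n + 1) := fun i =>
  if h : (i : ℕ) < n then
    (if ((π ⟨i, h⟩ : Fin n) : ℕ) < (a : ℕ)
      then ⟨((π ⟨i, h⟩ : Fin n) : ℕ), Nat.lt_succ_of_lt (π ⟨i, h⟩).isLt⟩
      else ⟨((π ⟨i, h⟩ : Fin n) : ℕ) + 1, Nat.succ_lt_succ (π ⟨i, h⟩).isLt⟩)
  else a

/-- Number of semi-Baxter permutations of size `n` with label `(h, k)`, where `h`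
(resp. `k`) is the number of active sites weakly below (resp. strictly above)
the last entry. -/
noncomputable def semiBaxterLabelCount (n h k : ℕ) : ℕ :=
  Nat.card {π : Equiv.Perm (Fin n) // IsSemiBaxter π ∧
    ∃ hn : 0 < n,
      h = Nat.card {a : Fin (n + 1) // ¬ Contains2413 (insertFun π a) ∧
            (a : ℕ) ≤ ((π ⟨n - 1, Nat.sub_lt hn Nat.one_pos⟩ : Fin n) : ℕ)} ∧
      k = Nat.card {a : Fin (n + 1) // ¬ Contains2413 (insertFun π a) ∧
            ((π ⟨n - 1, Nat.sub_lt hn Nat.one_pos⟩ : Fin n) : ℕ) < (a : ℕ)}}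

namespace SB
open Equiv Finset

variable {n : ℕ}

def upv (a v : ℕ) : ℕ := if v < a then v else v + 1
def dnv (a b : ℕ) : ℕ := if b ≤ a then b else b - 1

lemma upv_lt_upv {a v w : ℕ} : upv a v < upv a w ↔ v < w := by
  unfold upv; split <;> split <;> omega
lemma upv_lt_iff {a v b : ℕ} : upv a v < b ↔ v < dnv a b := by
  unfold upv dnv; split <;> split <;> omega
lemma le_upv_iff {a v b : ℕ} : b ≤ upv a v ↔ dnv a b ≤ v := by
  unfold upv dnv; split <;> split <;> omega
lemma upv_lt_self {a v : ℕ} : upv a v < a ↔ v < a := by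
  unfold upv; split <;> omega
lemma self_lt_upv {a v : ℕ} : a < upv a v ↔ a ≤ v := by
  unfold upv; split <;> omega

lemma insertFun_val {π : Equiv.Perm (Fin n)} {a : Fin (n+1)} {i : Fin (n+1)}
    (hi : (i : ℕ) < n) : ((insertFun π a i : Fin (n+1)) : ℕ) = upv a (π ⟨i, hi⟩) := by
  simp only [insertFun, dif_pos hi, upv]
  split <;> simp

lemma insertFun_val_last {π : Equiv.Perm (Fin n)} {a : Fin (n+1)} {i : Fin (n+1)}
    (hi : ¬ (i : ℕ) < n) : insertFun π a i = a := by
  simp only [insertFun, dif_neg hi]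

/-- `b` is blocked in `π`: inserting value `b` at the end creates a 2-41-3 pattern. -/
def Blocked (π : Equiv.Perm (Fin n)) (b : ℕ) : Prop :=
  ∃ i j j' : Fin n, (i : ℕ) < (j : ℕ) ∧ (j' : ℕ) = (j : ℕ) + 1 ∧
    ((π j' : ℕ) < (π i : ℕ)) ∧ ((π i : ℕ) < b) ∧ (b ≤ (π j : ℕ))

lemma contains_insertFun_iff (π : Equiv.Perm (Fin n)) (a : Fin (n+1)) :
    Contains2413 (insertFun π a) ↔ Contains2413 ⇑π ∨ Blocked π (a : ℕ) := by
  constructor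
  · rintro ⟨i, j, j', k, hij, hj', hjk, h1, h2, h3⟩
    have hi : (i : ℕ) < n := by omega
    have hj : (j : ℕ) < n := by omega
    have hj'n : (j' : ℕ) < n := by omega
    rw [Fin.lt_iff_val_lt_val] at h1 h2 h3
    rw [insertFun_val hi, insertFun_val hj, insertFun_val hj'n] at *
    by_cases hk : (k : ℕ) < n
    · rw [insertFun_val hk] at h2 h3
      left
      refine ⟨⟨i, hi⟩, ⟨j, hj⟩, ⟨j', hj'n⟩, ⟨k, hk⟩, hij, hj', hjk, ?_, ?_, ?_⟩ <;>
        rw [Fin.lt_iff_val_lt_val] <;> [skip; skip; skip] <;>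
        exact upv_lt_upv.mp (by assumption)
    · rw [insertFun_val_last hk] at h2 h3
      right
      exact ⟨⟨i, hi⟩, ⟨j, hj⟩, ⟨j', hj'n⟩, hij, hj',
        upv_lt_upv.mp h1, upv_lt_self.mp h2, self_lt_upv.mp h3⟩
  · rintro (⟨i, j, j', k, hij, hj', hjk, h1, h2, h3⟩ | ⟨i, j, j', hij, hj', h1, h2, h3⟩)
    · rw [Fin.lt_iff_val_lt_val] at h1 h2 h3
      refine ⟨⟨i, by omega⟩, ⟨j, by omega⟩, ⟨j', by omega⟩, ⟨k, by omega⟩,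
        hij, hj', hjk, ?_, ?_, ?_⟩ <;> rw [Fin.lt_iff_val_lt_val] <;>
        rw [insertFun_val (by simpa), insertFun_val (by simpa)] <;>
        rw [upv_lt_upv] <;> simpa
    · refine ⟨⟨i, by omega⟩, ⟨j, by omega⟩, ⟨j', by omega⟩, ⟨n, n.lt_succ_self⟩,
        hij, hj', by simpa using j'.isLt, ?_, ?_, ?_⟩ <;> rw [Fin.lt_iff_val_lt_val]
      · rw [insertFun_val (by simpa : ((⟨j', by omega⟩ : Fin (n+1)) : ℕ) < n),
          insertFun_val (by simpa : ((⟨i, by omega⟩ : Fin (n+1)) : ℕ) < n), upv_lt_upv]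
        simpa
      · rw [insertFun_val (by simpa : ((⟨i, by omega⟩ : Fin (n+1)) : ℕ) < n),
          insertFun_val_last (by simp), upv_lt_self]
        simpa
      · rw [insertFun_val (by simpa : ((⟨j, by omega⟩ : Fin (n+1)) : ℕ) < n),
          insertFun_val_last (by simp), self_lt_upv]
        simpa

variable {n : ℕ}

def insertPerm (π : Equiv.Perm (Fin n)) (a : Fin (n + 1)) : Equiv.Perm (Fin (n + 1)) :=
  finSuccEquivLast.trans ((Equiv.optionCongr π).trans (finSuccEquiv' a).symm)

lemma insertPerm_last (π : Equiv.Perm (Fin n)) (a : Fin (n + 1)) :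
    insertPerm π a (Fin.last n) = a := by
  simp [insertPerm]

lemma insertPerm_castSucc (π : Equiv.Perm (Fin n)) (a : Fin (n + 1)) (x : Fin n) :
    insertPerm π a (Fin.castSucc x) = a.succAbove (π x) := by
  simp [insertPerm]

lemma val_succAbove (a : Fin (n + 1)) (v : Fin n) :
    ((a.succAbove v : Fin (n+1)) : ℕ) = if (v : ℕ) < (a : ℕ) then (v : ℕ) else (v : ℕ) + 1 := by
  rcases lt_or_ge (Fin.castSucc v) a with h | h
  · rw [Fin.succAbove_of_castSucc_lt _ _ h, Fin.coe_castSucc,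
      if_pos (by simpa [Fin.lt_def] using h)]
  · rw [Fin.succAbove_of_le_castSucc _ _ h, Fin.val_succ,
      if_neg (by simp [Fin.le_def] at h; omega)]

lemma coe_insertPerm (π : Equiv.Perm (Fin n)) (a : Fin (n + 1)) :
    ⇑(insertPerm π a) = insertFun π a := by
  funext i
  by_cases hi : (i : ℕ) < n
  · have hc : i = Fin.castSucc ⟨i, hi⟩ := by apply Fin.ext; simp
    have hL : insertPerm π a i = a.succAbove (π ⟨i, hi⟩) := by
      conv_lhs => rw [hc]
      rw [insertPerm_castSucc]
    apply Fin.ext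
    rw [hL, val_succAbove]
    simp only [insertFun, dif_pos hi]
    split <;> simp
  · have : i = Fin.last n := by apply Fin.ext; rw [Fin.val_last]; omega
    rw [this, insertPerm_last, insertFun_val_last (by simp)]

lemma insertPerm_surjective (σ : Equiv.Perm (Fin (n + 1))) :
    ∃ π a, σ = insertPerm π a := by
  set a := σ (Fin.last n) with ha
  set E : Option (Fin n) ≃ Option (Fin n) :=
    (finSuccEquivLast.symm.trans σ).trans (finSuccEquiv' a) with hE
  have hnone : E none = none := by simp [hE, ← ha, finSuccEquiv'_at]
  refine ⟨Equiv.removeNone E, a, ?_⟩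
  ext i
  by_cases hi : (i : ℕ) < n
  · have hic : i = Fin.castSucc ⟨i, hi⟩ := by apply Fin.ext; simp
    have hR : insertPerm (Equiv.removeNone E) a i
        = a.succAbove (Equiv.removeNone E ⟨i, hi⟩) := by
      conv_lhs => rw [hic]
      rw [insertPerm_castSucc]
    rw [hR]
    have hsome : ∃ y, E (some ⟨i, hi⟩) = some y := by
      rcases h : E (some ⟨i, hi⟩) with _ | y
      · exfalso
        have := E.injective (h.trans hnone.symm)
        simp at this
      · exact ⟨y, rfl⟩
    have h2 := Equiv.removeNone_some E hsome
    have h3 : E (some ⟨i, hi⟩) = finSuccEquiv' a (σ (Fin.castSucc ⟨i, hi⟩)) := by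
      simp [hE]
    rw [h3] at h2
    have h4 := congrArg (finSuccEquiv' a).symm h2
    simp at h4
    exact congrArg Fin.val h4.symm
  · have : i = Fin.last n := by apply Fin.ext; rw [Fin.val_last]; omega
    rw [this, insertPerm_last, ← ha]

variable {n : ℕ}

lemma val_insertPerm {π : Equiv.Perm (Fin (n+1))} {a : Fin (n+2)} {i : Fin (n+2)}
    (hi : (i : ℕ) < n + 1) : ((insertPerm π a i : Fin (n+2)) : ℕ) = upv a (π ⟨i, hi⟩) := by
  rw [show insertPerm π a i = insertFun π a i from congrFun (coe_insertPerm π a) i]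
  exact insertFun_val hi

lemma val_insertPerm_last {π : Equiv.Perm (Fin (n+1))} {a : Fin (n+2)} {i : Fin (n+2)}
    (hi : ¬ (i : ℕ) < n + 1) : insertPerm π a i = a := by
  rw [show insertPerm π a i = insertFun π a i from congrFun (coe_insertPerm π a) i]
  exact insertFun_val_last hi

/-- the extra blocking condition coming from the pair formed by the old last entry
and the new last entry -/
def Extra (π : Equiv.Perm (Fin (n+1))) (a : Fin (n+2)) (b : ℕ) : Prop :=
  ∃ i : Fin (n+1), (i : ℕ) < n ∧ (a : ℕ) ≤ (π i : ℕ) ∧ (π i : ℕ) + 1 < b ∧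
    b ≤ upv a (π (Fin.last n) : ℕ)

lemma blocked_insert_iff (π : Equiv.Perm (Fin (n+1))) (a : Fin (n+2)) (b : ℕ) :
    Blocked (insertPerm π a) b ↔ Blocked π (dnv a b) ∨ Extra π a b := by
  constructor
  · rintro ⟨i, j, j', hij, hj', h1, h2, h3⟩
    by_cases hj : (j : ℕ) < n
    · have hi : (i : ℕ) < n + 1 := by omega
      have hjn : (j : ℕ) < n + 1 := by omega
      have hj'n : (j' : ℕ) < n + 1 := by omega
      rw [val_insertPerm hi] at h1 h2
      rw [val_insertPerm hjn] at h3
      rw [val_insertPerm hj'n] at h1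
      exact Or.inl ⟨⟨i, hi⟩, ⟨j, hjn⟩, ⟨j', hj'n⟩, hij, by simpa using hj',
        upv_lt_upv.mp h1, upv_lt_iff.mp h2, le_upv_iff.mp h3⟩
    · have hjn : (j : ℕ) = n + 1 ∨ (j : ℕ) = n := by omega
      have hjeq : (j : ℕ) = n := by
        rcases hjn with h | h
        · exfalso; have := j'.isLt; omega
        · exact h
      have hi : (i : ℕ) < n + 1 := by omega
      have hj'big : ¬ (j' : ℕ) < n + 1 := by omega
      rw [val_insertPerm hi] at h1 h2
      rw [val_insertPerm (by omega : (j : ℕ) < n + 1)] at h3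
      rw [val_insertPerm_last hj'big] at h1
      have hlast : (⟨(j : ℕ), by omega⟩ : Fin (n+1)) = Fin.last n := by
        apply Fin.ext; simp [hjeq]
      rw [hlast] at h3
      have hale : (a : ℕ) ≤ (π ⟨i, hi⟩ : ℕ) := self_lt_upv.mp h1
      have hupv : upv a (π ⟨i, hi⟩) = (π ⟨i, hi⟩ : ℕ) + 1 := if_neg (by omega)
      rw [hupv] at h2
      exact Or.inr ⟨⟨i, hi⟩, by simp only [Fin.val_mk]; omega, hale, h2, h3⟩
  · rintro (⟨i, j, j', hij, hj', h1, h2, h3⟩ | ⟨i, hi, h1, h2, h3⟩)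
    · refine ⟨⟨i, by omega⟩, ⟨j, by omega⟩, ⟨j', by omega⟩, hij, by simpa using hj',
        ?_, ?_, ?_⟩
      · rw [val_insertPerm (by have := j'.isLt; simp; omega),
          val_insertPerm (by have := i.isLt; simp; omega)]
        simpa [upv_lt_upv] using h1
      · rw [val_insertPerm (by have := i.isLt; simp; omega)]
        simpa [upv_lt_iff] using h2
      · rw [val_insertPerm (by have := j.isLt; simp; omega)]
        simpa [le_upv_iff] using h3
    · refine ⟨⟨i, by omega⟩, ⟨n, by omega⟩, ⟨n + 1, by omega⟩, by simpa using hi,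
        by simp, ?_, ?_, ?_⟩
      · rw [val_insertPerm_last (by simp), val_insertPerm (by simp; omega)]
        have : upv a (π ⟨i, by omega⟩) = (π ⟨i, by omega⟩ : ℕ) + 1 := by
          simp only [Fin.eta]; exact if_neg (by omega)
        simp only [Fin.eta] at this ⊢
        omega
      · rw [val_insertPerm (by simp; omega)]
        have : upv a (π ⟨i, by omega⟩) = (π ⟨i, by omega⟩ : ℕ) + 1 := by
          simp only [Fin.eta]; exact if_neg (by omega)
        simp only [Fin.eta] at this ⊢
        omega
      · rw [val_insertPerm (by simp)]
        have : (⟨n, by omega⟩ : Fin (n+1)) = Fin.last n := rfl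
        rw [this]
        exact h3

lemma extra_desc {π : Equiv.Perm (Fin (n+1))} {a : Fin (n+2)} {b : ℕ}
    (hap : (a : ℕ) ≤ (π (Fin.last n) : ℕ)) :
    Extra π a b ↔ (a : ℕ) + 1 < b ∧ b ≤ (π (Fin.last n) : ℕ) + 1 := by
  have hup : upv a (π (Fin.last n) : ℕ) = (π (Fin.last n) : ℕ) + 1 := if_neg (by omega)
  constructor
  · rintro ⟨i, hi, h1, h2, h3⟩
    rw [hup] at h3
    exact ⟨by omega, h3⟩
  · rintro ⟨h1, h2⟩
    have hap' : (a : ℕ) < (π (Fin.last n) : ℕ) := by omega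
    have han : (a : ℕ) < n + 1 := by have := (π (Fin.last n)).isLt; omega
    refine ⟨π.symm ⟨a, han⟩, ?_, by simp, by simp; omega, by rw [hup]; omega⟩
    have hne : π.symm ⟨(a : ℕ), han⟩ ≠ Fin.last n := by
      intro h
      have : π (π.symm ⟨(a : ℕ), han⟩) = π (Fin.last n) := by rw [h]
      rw [Equiv.apply_symm_apply] at this
      rw [← this] at hap'
      simp at hap'
    have := (π.symm ⟨(a : ℕ), han⟩).isLt
    have hv : (π.symm ⟨(a : ℕ), han⟩ : ℕ) ≠ n := fun h => hne (Fin.ext (by simp [h]))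
    omega

lemma extra_asc {π : Equiv.Perm (Fin (n+1))} {a : Fin (n+2)} {b : ℕ}
    (hap : (π (Fin.last n) : ℕ) < (a : ℕ)) : ¬ Extra π a b := by
  rintro ⟨i, hi, h1, h2, h3⟩
  have hup : upv a (π (Fin.last n) : ℕ) = (π (Fin.last n) : ℕ) := if_pos (by omega)
  omega
attribute [local instance] Classical.propDecidable

open Finset

noncomputable section

/-- the set of active sites -/
def Act (π : Equiv.Perm (Fin (n+1))) : Finset (Fin (n+2)) :=
  univ.filter fun b => ¬ Blocked π (b : ℕ)

def pLast (π : Equiv.Perm (Fin (n+1))) : ℕ := (π (Fin.last n) : ℕ)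

def Alow (π : Equiv.Perm (Fin (n+1))) : Finset (Fin (n+2)) :=
  (Act π).filter fun b => (b : ℕ) ≤ pLast π

def Ahigh (π : Equiv.Perm (Fin (n+1))) : Finset (Fin (n+2)) :=
  (Act π).filter fun b => pLast π < (b : ℕ)

def hlab (π : Equiv.Perm (Fin (n+1))) : ℕ := (Alow π).card
def klab (π : Equiv.Perm (Fin (n+1))) : ℕ := (Ahigh π).card

def rlow (π : Equiv.Perm (Fin (n+1))) (a : Fin (n+2)) : ℕ :=
  ((Act π).filter fun c : Fin (n+2) => (c : ℕ) ≤ (a : ℕ)).card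

def rhigh (π : Equiv.Perm (Fin (n+1))) (a : Fin (n+2)) : ℕ :=
  ((Act π).filter fun c : Fin (n+2) => (a : ℕ) ≤ (c : ℕ)).card

lemma zero_mem_act (π : Equiv.Perm (Fin (n+1))) : (0 : Fin (n+2)) ∈ Act π := by
  simp only [Act, mem_filter, mem_univ, true_and]
  rintro ⟨i, j, j', _, _, _, h2, _⟩
  simp at h2

lemma last_mem_act (π : Equiv.Perm (Fin (n+1))) : (Fin.last (n+1)) ∈ Act π := by
  simp only [Act, mem_filter, mem_univ, true_and]
  rintro ⟨i, j, j', _, _, _, _, h3⟩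
  simp only [Fin.val_last] at h3
  have := (π j).isLt
  omega

lemma hlab_pos (π : Equiv.Perm (Fin (n+1))) : 1 ≤ hlab π := by
  refine card_pos.mpr ⟨0, ?_⟩
  simp only [Alow, mem_filter]
  exact ⟨zero_mem_act π, by simp [pLast]⟩

lemma klab_pos (π : Equiv.Perm (Fin (n+1))) : 1 ≤ klab π := by
  refine card_pos.mpr ⟨Fin.last (n+1), ?_⟩
  simp only [Ahigh, mem_filter]
  refine ⟨last_mem_act π, ?_⟩
  simp only [Fin.val_last, pLast]
  exact (π (Fin.last n)).isLt

lemma hlab_le (π : Equiv.Perm (Fin (n+1))) : hlab π ≤ n + 2 := by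
  exact le_trans (card_le_card (filter_subset _ _)) (by simpa using card_le_univ (Act π))

lemma alow_union_ahigh (π : Equiv.Perm (Fin (n+1))) : Alow π ∪ Ahigh π = Act π := by
  rw [Alow, Ahigh]
  rw [← filter_or]
  rw [filter_true_of_mem]
  intro x _
  omega

lemma alow_disj_ahigh (π : Equiv.Perm (Fin (n+1))) : Disjoint (Alow π) (Ahigh π) := by
  rw [Alow, Ahigh]
  rw [Finset.disjoint_left]
  intro x hx1 hx2
  simp only [mem_filter] at hx1 hx2
  omega

lemma hlab_add_klab (π : Equiv.Perm (Fin (n+1))) : hlab π + klab π = (Act π).card := by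
  rw [hlab, klab, ← card_union_of_disjoint (alow_disj_ahigh π), alow_union_ahigh]

/-- rank-counting: in a finite set of naturals (presented inside `Fin N`), there is
exactly one element of each rank `1 ≤ r ≤ card`. -/
lemma rank_count {N : ℕ} (s : Finset (Fin N)) (r : ℕ) :
    (s.filter fun a : Fin N => (s.filter fun c : Fin N => (c : ℕ) ≤ (a : ℕ)).card = r).card
      = if 1 ≤ r ∧ r ≤ s.card then 1 else 0 := by
  have mono : ∀ a ∈ s, ∀ a' ∈ s, (a : ℕ) < (a' : ℕ) → (s.filter fun c : Fin N => (c : ℕ) ≤ (a : ℕ)).card < (s.filter fun c : Fin N => (c : ℕ) ≤ (a' : ℕ)).card := by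
    intro a ha a' ha' hlt
    apply card_lt_card
    constructor
    · intro c hc
      simp only [mem_filter] at hc ⊢
      exact ⟨hc.1, by omega⟩
    · intro hsub
      have : a' ∈ s.filter fun c : Fin N => (c : ℕ) ≤ (a' : ℕ) := by
        simp only [mem_filter]; exact ⟨ha', le_refl _⟩
      have h2 := hsub this
      simp only [mem_filter] at h2
      omega
  have injOn : ∀ a ∈ s, ∀ a' ∈ s, (s.filter fun c : Fin N => (c : ℕ) ≤ (a : ℕ)).card = (s.filter fun c : Fin N => (c : ℕ) ≤ (a' : ℕ)).card → a = a' := by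
    intro a ha a' ha' heq
    rcases lt_trichotomy (a : ℕ) (a' : ℕ) with h | h | h
    · exact absurd heq (Nat.ne_of_lt (mono a ha a' ha' h))
    · exact Fin.ext h
    · exact absurd heq.symm (Nat.ne_of_lt (mono a' ha' a ha h))
  have hge1 : ∀ a ∈ s, 1 ≤ (s.filter fun c : Fin N => (c : ℕ) ≤ (a : ℕ)).card := by
    intro a ha
    refine card_pos.mpr ⟨a, ?_⟩
    simp only [mem_filter]; exact ⟨ha, le_refl _⟩
  have hlecard : ∀ a : Fin N, (s.filter fun c : Fin N => (c : ℕ) ≤ (a : ℕ)).card ≤ s.card := fun a => card_le_card (filter_subset _ _)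
  have himage : s.image (fun a : Fin N => (s.filter fun c : Fin N => (c : ℕ) ≤ (a : ℕ)).card) = Finset.Icc 1 s.card := by
    apply Finset.eq_of_subset_of_card_le
    · intro x hx
      simp only [mem_image] at hx
      obtain ⟨a, ha, rfl⟩ := hx
      simp only [Finset.mem_Icc]
      exact ⟨hge1 a ha, hlecard a⟩
    · rw [Nat.card_Icc]
      rw [card_image_of_injOn fun a ha a' ha' h => injOn a ha a' ha' h]
      omega
  by_cases hr : 1 ≤ r ∧ r ≤ s.card
  · rw [if_pos hr]
    have : r ∈ s.image (fun a : Fin N => (s.filter fun c : Fin N => (c : ℕ) ≤ (a : ℕ)).card) := by rw [himage]; simp only [Finset.mem_Icc]; exact hr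
    simp only [mem_image] at this
    obtain ⟨a, ha, hra⟩ := this
    rw [show s.filter (fun a : Fin N => (s.filter fun c : Fin N => (c : ℕ) ≤ (a : ℕ)).card = r) = {a} from ?_]
    · exact card_singleton a
    · ext x
      simp only [mem_filter, mem_singleton]
      constructor
      · rintro ⟨hx, hrx⟩
        exact injOn x hx a ha (hrx.trans hra.symm)
      · rintro rfl
        exact ⟨ha, hra⟩
  · rw [if_neg hr]
    rw [card_eq_zero]
    rw [filter_eq_empty_iff]
    intro a ha hcon
    exact hr ⟨by rw [← hcon]; exact hge1 a ha, by rw [← hcon]; exact hlecard a⟩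
lemma dnv_le {a b : ℕ} (h : b ≤ a) : dnv a b = b := if_pos h
lemma dnv_gt {a b : ℕ} (h : a < b) : dnv a b = b - 1 := if_neg (by omega)

variable {π : Equiv.Perm (Fin (n+1))} {a : Fin (n+2)}

lemma mem_act_iff {b : Fin (n+2)} : b ∈ Act π ↔ ¬ Blocked π (b : ℕ) := by
  simp [Act]

lemma mem_alow_iff {b : Fin (n+2)} :
    b ∈ Alow π ↔ ¬ Blocked π (b : ℕ) ∧ (b : ℕ) ≤ pLast π := by
  simp [Alow, Act, and_assoc]

lemma mem_ahigh_iff {b : Fin (n+2)} :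
    b ∈ Ahigh π ↔ ¬ Blocked π (b : ℕ) ∧ pLast π < (b : ℕ) := by
  simp [Ahigh, Act, and_assoc]

lemma pLast_insert : pLast (insertPerm π a) = (a : ℕ) := by
  rw [pLast, insertPerm_last]

lemma extra_gt {b : ℕ} (h : Extra π a b) : (a : ℕ) + 1 < b := by
  obtain ⟨i, _, h1, h2, _⟩ := h; omega

lemma alow_insert (hact : ¬ Blocked π (a : ℕ)) :
    Alow (insertPerm π a) = ((Act π).filter fun c : Fin (n+2) => (c : ℕ) ≤ (a : ℕ)).image Fin.castSucc := by
  ext b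
  rw [mem_alow_iff, pLast_insert]
  simp only [mem_image, mem_filter, mem_act_iff]
  constructor
  · rintro ⟨hbl, hba⟩
    rw [blocked_insert_iff] at hbl
    push_neg at hbl
    obtain ⟨hb1, _⟩ := hbl
    rw [dnv_le hba] at hb1
    exact ⟨⟨(b : ℕ), by omega⟩, ⟨hb1, by simpa using hba⟩, by apply Fin.ext; simp⟩
  · rintro ⟨c, ⟨hc1, hc2⟩, rfl⟩
    refine ⟨?_, by simpa using hc2⟩
    rw [blocked_insert_iff]
    rintro (h | h)
    · rw [Fin.coe_castSucc, dnv_le hc2] at h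
      exact hc1 h
    · have := extra_gt h
      simp at this
      omega

lemma hlab_insert (hact : ¬ Blocked π (a : ℕ)) :
    hlab (insertPerm π a) = rlow π a := by
  rw [hlab, alow_insert hact, card_image_of_injective _ (Fin.castSucc_injective _), rlow]

lemma ahigh_insert_desc (hap : (a : ℕ) ≤ pLast π) (hact : ¬ Blocked π (a : ℕ)) :
    Ahigh (insertPerm π a)
      = insert (⟨(a : ℕ) + 1, by omega⟩ : Fin (n+3)) ((Ahigh π).image Fin.succ) := by
  have hpn : pLast π < n + 1 := (π (Fin.last n)).isLt
  ext b
  rw [mem_ahigh_iff, pLast_insert]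
  simp only [mem_insert, mem_image, mem_ahigh_iff]
  constructor
  · rintro ⟨hbl, hba⟩
    rw [blocked_insert_iff] at hbl
    push_neg at hbl
    obtain ⟨hb1, hb2⟩ := hbl
    rw [extra_desc hap] at hb2
    rw [show ((π (Fin.last n) : ℕ)) = pLast π from rfl] at hb2
    push_neg at hb2
    by_cases hb : (b : ℕ) = (a : ℕ) + 1
    · exact Or.inl (Fin.ext (by simpa using hb))
    · have hgt : (a : ℕ) + 1 < (b : ℕ) := by omega
      have hgtp : pLast π + 1 < (b : ℕ) := by
        have := hb2 hgt; omega
      rw [dnv_gt (by omega)] at hb1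
      refine Or.inr ⟨⟨(b : ℕ) - 1, by omega⟩, ⟨by simpa using hb1, by simp; omega⟩, ?_⟩
      apply Fin.ext
      simp [Fin.val_succ]
      omega
  · rintro (rfl | ⟨c, ⟨hc1, hc2⟩, rfl⟩)
    · refine ⟨?_, by simp⟩
      rw [blocked_insert_iff]
      rintro (h | h)
      · rw [dnv_gt (by simp)] at h
        simp at h
        exact hact h
      · have := extra_gt h
        simp at this
    · have hcb : (Fin.succ c : ℕ) = (c : ℕ) + 1 := rfl
      refine ⟨?_, by rw [hcb]; omega⟩
      rw [blocked_insert_iff]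
      rintro (h | h)
      · rw [hcb, dnv_gt (by omega)] at h
        simp at h
        exact hc1 h
      · rw [extra_desc hap] at h
        rw [show ((π (Fin.last n) : ℕ)) = pLast π from rfl] at h
        rw [hcb] at h
        omega

lemma klab_insert_desc (hap : (a : ℕ) ≤ pLast π) (hact : ¬ Blocked π (a : ℕ)) :
    klab (insertPerm π a) = klab π + 1 := by
  rw [klab, ahigh_insert_desc hap hact, card_insert_of_notMem, 
    card_image_of_injective _ (Fin.succ_injective _), klab]
  rintro hmem
  simp only [mem_image, mem_ahigh_iff] at hmem
  obtain ⟨c, ⟨_, hc2⟩, hc3⟩ := hmem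
  have : (c : ℕ) + 1 = (a : ℕ) + 1 := by
    rw [show ((c : ℕ) + 1) = (Fin.succ c : ℕ) from rfl, hc3]
  omega

lemma ahigh_insert_asc (hap : pLast π < (a : ℕ)) :
    Ahigh (insertPerm π a)
      = ((Act π).filter fun c : Fin (n+2) => (a : ℕ) ≤ (c : ℕ)).image Fin.succ := by
  ext b
  rw [mem_ahigh_iff, pLast_insert]
  simp only [mem_image, mem_filter, mem_act_iff]
  constructor
  · rintro ⟨hbl, hba⟩
    rw [blocked_insert_iff] at hbl
    push_neg at hbl
    obtain ⟨hb1, _⟩ := hbl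
    rw [dnv_gt hba] at hb1
    refine ⟨⟨(b : ℕ) - 1, by omega⟩, ⟨by simpa using hb1, by simp; omega⟩, ?_⟩
    apply Fin.ext
    simp [Fin.val_succ]
    omega
  · rintro ⟨c, ⟨hc1, hc2⟩, rfl⟩
    have hcb : (Fin.succ c : ℕ) = (c : ℕ) + 1 := rfl
    refine ⟨?_, by rw [hcb]; omega⟩
    rw [blocked_insert_iff]
    rintro (h | h)
    · rw [hcb, dnv_gt (by omega)] at h
      simp at h
      exact hc1 h
    · exact extra_asc hap h

lemma klab_insert_asc (hap : pLast π < (a : ℕ)) :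
    klab (insertPerm π a) = rhigh π a := by
  rw [klab, ahigh_insert_asc hap, card_image_of_injective _ (Fin.succ_injective _), rhigh]

lemma rlow_desc (hap : (a : ℕ) ≤ pLast π) :
    rlow π a = ((Alow π).filter fun c : Fin (n+2) => (c : ℕ) ≤ (a : ℕ)).card := by
  rw [rlow, Alow, filter_filter]
  congr 1
  apply filter_congr
  intro c _
  constructor
  · intro h; exact ⟨by omega, h⟩
  · intro h; exact h.2

lemma rlow_asc (hap : pLast π < (a : ℕ)) :
    rlow π a = hlab π + ((Ahigh π).filter fun c : Fin (n+2) => (c : ℕ) ≤ (a : ℕ)).card := by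
  rw [rlow, hlab]
  rw [show (Act π).filter (fun c : Fin (n+2) => (c : ℕ) ≤ (a : ℕ))
      = Alow π ∪ ((Ahigh π).filter fun c : Fin (n+2) => (c : ℕ) ≤ (a : ℕ)) from ?_]
  · rw [card_union_of_disjoint]
    exact disjoint_of_subset_right (filter_subset _ _) (alow_disj_ahigh π)
  · ext c
    simp only [mem_union, mem_filter, mem_alow_iff, mem_ahigh_iff, mem_act_iff]
    constructor
    · rintro ⟨h1, h2⟩
      by_cases hc : (c : ℕ) ≤ pLast π
      · exact Or.inl ⟨h1, hc⟩
      · exact Or.inr ⟨⟨h1, by omega⟩, h2⟩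
    · rintro (⟨h1, h2⟩ | ⟨⟨h1, h2⟩, h3⟩)
      · exact ⟨h1, by omega⟩
      · exact ⟨h1, h3⟩

lemma rlow_add_rhigh (hact : ¬ Blocked π (a : ℕ)) :
    rlow π a + rhigh π a = (Act π).card + 1 := by
  have h1 : (Act π).filter (fun c : Fin (n+2) => (a : ℕ) ≤ (c : ℕ))
      = insert a ((Act π).filter fun c : Fin (n+2) => ¬ ((c : ℕ) ≤ (a : ℕ))) := by
    ext c
    simp only [mem_insert, mem_filter, mem_act_iff]
    constructor
    · rintro ⟨h1, h2⟩
      by_cases hc : c = a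
      · exact Or.inl hc
      · exact Or.inr ⟨h1, by rw [Fin.ext_iff] at hc; omega⟩
    · rintro (rfl | ⟨h1, h2⟩)
      · exact ⟨hact, le_refl _⟩
      · exact ⟨h1, by omega⟩
  have h2 : a ∉ (Act π).filter fun c : Fin (n+2) => ¬ ((c : ℕ) ≤ (a : ℕ)) := by
    simp
  rw [rlow, rhigh, h1, card_insert_of_notMem h2, ← Nat.add_assoc,
    card_filter_add_card_filter_not]
lemma insertPerm_inj {π π' : Equiv.Perm (Fin (n+1))} {a a' : Fin (n+2)}
    (h : insertPerm π a = insertPerm π' a') : π = π' ∧ a = a' := by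
  have ha : a = a' := by
    have := congrFun (congrArg (fun e : Equiv.Perm (Fin (n+2)) => ⇑e) h) (Fin.last (n+1))
    simpa [insertPerm_last] using this
  subst ha
  refine ⟨?_, rfl⟩
  apply Equiv.ext
  intro x
  have := congrFun (congrArg (fun e : Equiv.Perm (Fin (n+2)) => ⇑e) h) (Fin.castSucc x)
  simp only [insertPerm_castSucc] at this
  exact Fin.succAbove_right_injective this

lemma hlab_insert_pos {h : ℕ} (hact : ¬ Blocked π (a : ℕ))
    (hh : hlab (insertPerm π a) = h) : 1 ≤ h := hh ▸ hlab_pos _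

lemma Dcard (π : Equiv.Perm (Fin (n+1))) (h k : ℕ) (hk : 1 ≤ k) :
    (univ.filter fun a : Fin (n+2) => ¬ Blocked π (a : ℕ) ∧
        hlab (insertPerm π a) = h ∧ klab (insertPerm π a) = k).card
      = (if klab π = k - 1 ∧ h ≤ hlab π ∧ 1 ≤ h then 1 else 0)
        + (if hlab π < h ∧ klab π = h + k - 1 - hlab π then 1 else 0) := by
  have hsplit : (univ.filter fun a : Fin (n+2) => ¬ Blocked π (a : ℕ) ∧
        hlab (insertPerm π a) = h ∧ klab (insertPerm π a) = k)
      = (univ.filter fun a : Fin (n+2) => (¬ Blocked π (a : ℕ) ∧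
          hlab (insertPerm π a) = h ∧ klab (insertPerm π a) = k) ∧ (a : ℕ) ≤ pLast π)
        ∪ (univ.filter fun a : Fin (n+2) => (¬ Blocked π (a : ℕ) ∧
          hlab (insertPerm π a) = h ∧ klab (insertPerm π a) = k) ∧ pLast π < (a : ℕ)) := by
    rw [← filter_or]
    apply filter_congr
    intro a _
    constructor
    · intro hx; by_cases hc : (a : ℕ) ≤ pLast π
      · exact Or.inl ⟨hx, hc⟩
      · exact Or.inr ⟨hx, by omega⟩
    · rintro (⟨hx, _⟩ | ⟨hx, _⟩) <;> exact hx
  rw [hsplit, card_union_of_disjoint]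
  · congr 1
    -- low part
    · by_cases hkk : klab π = k - 1
      · have hset : (univ.filter fun a : Fin (n+2) => (¬ Blocked π (a : ℕ) ∧
            hlab (insertPerm π a) = h ∧ klab (insertPerm π a) = k) ∧ (a : ℕ) ≤ pLast π)
            = (Alow π).filter fun x : Fin (n+2) =>
                ((Alow π).filter fun c : Fin (n+2) => (c : ℕ) ≤ (x : ℕ)).card = h := by
          ext a
          simp only [mem_filter, mem_univ, true_and, mem_alow_iff]
          constructor
          · rintro ⟨⟨hbl, h1, _⟩, hle⟩
            rw [hlab_insert hbl, rlow_desc hle] at h1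
            exact ⟨⟨hbl, hle⟩, h1⟩
          · rintro ⟨⟨hbl, hle⟩, hr⟩
            refine ⟨⟨hbl, ?_, ?_⟩, hle⟩
            · rw [hlab_insert hbl, rlow_desc hle]; exact hr
            · rw [klab_insert_desc hle hbl]; omega
        rw [hset, rank_count]
        have : (1 ≤ h ∧ h ≤ (Alow π).card) ↔ (klab π = k - 1 ∧ h ≤ hlab π ∧ 1 ≤ h) := by
          rw [← hlab]
          constructor
          · rintro ⟨u, v⟩; exact ⟨hkk, v, u⟩
          · rintro ⟨_, v, u⟩; exact ⟨u, v⟩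
        rw [if_congr this rfl rfl]
      · rw [if_neg (by tauto)]
        rw [card_eq_zero, filter_eq_empty_iff]
        rintro a _ ⟨⟨hbl, _, h2⟩, hle⟩
        rw [klab_insert_desc hle hbl] at h2
        omega
    -- high part
    · by_cases hhl : hlab π < h ∧ hlab π + klab π + 1 = h + k
      · obtain ⟨hh1, hh2⟩ := hhl
        have hset : (univ.filter fun a : Fin (n+2) => (¬ Blocked π (a : ℕ) ∧
            hlab (insertPerm π a) = h ∧ klab (insertPerm π a) = k) ∧ pLast π < (a : ℕ))
            = (Ahigh π).filter fun x : Fin (n+2) =>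
                ((Ahigh π).filter fun c : Fin (n+2) => (c : ℕ) ≤ (x : ℕ)).card = h - hlab π := by
          ext a
          simp only [mem_filter, mem_univ, true_and, mem_ahigh_iff]
          constructor
          · rintro ⟨⟨hbl, h1, _⟩, hgt⟩
            rw [hlab_insert hbl, rlow_asc hgt] at h1
            exact ⟨⟨hbl, hgt⟩, by omega⟩
          · rintro ⟨⟨hbl, hgt⟩, hr⟩
            have hsum := rlow_add_rhigh (π := π) (a := a) hbl
            rw [← hlab_add_klab] at hsum
            have hrl : rlow π a = h := by
              rw [rlow_asc hgt, hr]; omega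
            refine ⟨⟨hbl, ?_, ?_⟩, hgt⟩
            · rw [hlab_insert hbl]; exact hrl
            · rw [klab_insert_asc hgt]; omega
          -- need rkA ≥ 1 for hr → h computation? omega handles: hr : card = h - hlab.
        rw [hset, rank_count, ← klab]
        rw [if_pos (by omega), if_pos (by constructor <;> omega)]
      · rw [if_neg (by omega)]
        rw [card_eq_zero, filter_eq_empty_iff]
        rintro a _ ⟨⟨hbl, h1, h2⟩, hgt⟩
        have hsum := rlow_add_rhigh (π := π) (a := a) hbl
        rw [← hlab_add_klab] at hsum
        rw [hlab_insert hbl, rlow_asc hgt] at h1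
        rw [klab_insert_asc hgt] at h2
        rw [rlow_asc hgt] at hsum
        have hk1 : 1 ≤ ((Ahigh π).filter fun c : Fin (n+2) => (c : ℕ) ≤ (a : ℕ)).card := by
          refine card_pos.mpr ⟨a, ?_⟩
          rw [mem_filter, mem_ahigh_iff]
          exact ⟨⟨hbl, hgt⟩, le_refl _⟩
        omega
  · rw [disjoint_left]
    intro x hx1 hx2
    simp only [mem_filter] at hx1 hx2
    omega
lemma alow_eq_filter (π : Equiv.Perm (Fin (n+1))) :
    Alow π = univ.filter fun a : Fin (n+2) => ¬ Blocked π (a : ℕ) ∧ (a : ℕ) ≤ pLast π := by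
  ext b
  rw [mem_alow_iff, mem_filter]
  simp

lemma ahigh_eq_filter (π : Equiv.Perm (Fin (n+1))) :
    Ahigh π = univ.filter fun a : Fin (n+2) => ¬ Blocked π (a : ℕ) ∧ pLast π < (a : ℕ) := by
  ext b
  rw [mem_ahigh_iff, mem_filter]
  simp

lemma natCard_low (π : Equiv.Perm (Fin (n+1))) (hsb : IsSemiBaxter π) (hn : 0 < n + 1) :
    Nat.card {a : Fin (n+2) // ¬ Contains2413 (insertFun π a) ∧
      (a : ℕ) ≤ ((π ⟨n + 1 - 1, Nat.sub_lt hn Nat.one_pos⟩ : Fin (n+1)) : ℕ)} = hlab π := by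
  have hidx : (⟨n + 1 - 1, Nat.sub_lt hn Nat.one_pos⟩ : Fin (n+1)) = Fin.last n := rfl
  rw [Nat.card_eq_fintype_card, Fintype.card_subtype, hlab, alow_eq_filter]
  apply congrArg card
  apply filter_congr
  intro a _
  rw [hidx, contains_insertFun_iff]
  rw [IsSemiBaxter] at hsb
  constructor
  · rintro ⟨h1, h2⟩; exact ⟨fun hb => h1 (Or.inr hb), h2⟩
  · rintro ⟨h1, h2⟩; exact ⟨fun hb => by rcases hb with hb | hb; exact hsb hb; exact h1 hb, h2⟩

lemma natCard_high (π : Equiv.Perm (Fin (n+1))) (hsb : IsSemiBaxter π) (hn : 0 < n + 1) :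
    Nat.card {a : Fin (n+2) // ¬ Contains2413 (insertFun π a) ∧
      ((π ⟨n + 1 - 1, Nat.sub_lt hn Nat.one_pos⟩ : Fin (n+1)) : ℕ) < (a : ℕ)} = klab π := by
  have hidx : (⟨n + 1 - 1, Nat.sub_lt hn Nat.one_pos⟩ : Fin (n+1)) = Fin.last n := rfl
  rw [Nat.card_eq_fintype_card, Fintype.card_subtype, klab, ahigh_eq_filter]
  apply congrArg card
  apply filter_congr
  intro a _
  rw [hidx, contains_insertFun_iff]
  rw [IsSemiBaxter] at hsb
  constructor
  · rintro ⟨h1, h2⟩; exact ⟨fun hb => h1 (Or.inr hb), h2⟩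
  · rintro ⟨h1, h2⟩; exact ⟨fun hb => by rcases hb with hb | hb; exact hsb hb; exact h1 hb, h2⟩

def cnt (N h k : ℕ) : ℕ :=
  (univ.filter fun π : Equiv.Perm (Fin (N+1)) =>
    IsSemiBaxter π ∧ hlab π = h ∧ klab π = k).card

lemma sbcount_eq (n h k : ℕ) : semiBaxterLabelCount (n+1) h k = cnt n h k := by
  rw [semiBaxterLabelCount, Nat.card_eq_fintype_card, Fintype.card_subtype, cnt]
  apply congrArg card
  apply filter_congr
  intro π _
  constructor
  · rintro ⟨hsb, hn, hh, hk⟩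
    exact ⟨hsb, by rw [hh, natCard_low π hsb hn], by rw [hk, natCard_high π hsb hn]⟩
  · rintro ⟨hsb, hh, hk⟩
    exact ⟨hsb, Nat.succ_pos n,
      by rw [natCard_low π hsb (Nat.succ_pos n), hh],
      by rw [natCard_high π hsb (Nat.succ_pos n), hk]⟩

lemma not_contains_one (f : Fin 1 → Fin 1) : ¬ Contains2413 f := by
  rintro ⟨i, j, j', k, hij, _, _, _, _, _⟩
  have := i.isLt
  have := j.isLt
  omega

lemma not_blocked_one (π : Equiv.Perm (Fin 1)) (b : ℕ) : ¬ Blocked π b := by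
  rintro ⟨i, j, j', hij, _, _, _, _⟩
  have := i.isLt
  have := j.isLt
  omega

lemma hlab_one (π : Equiv.Perm (Fin 1)) : hlab π = 1 := by
  have : Alow π = {0} := by
    ext b
    rw [mem_alow_iff]
    simp only [mem_singleton, not_blocked_one, not_false_iff, true_and]
    rw [Fin.ext_iff]
    have : pLast π = 0 := by
      rw [pLast]
      exact Fin.val_eq_zero _
    simp only [Fin.val_zero]
    omega
  rw [hlab, this, card_singleton]

lemma klab_one (π : Equiv.Perm (Fin 1)) : klab π = 1 := by
  have : Ahigh π = {1} := by
    ext b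
    rw [mem_ahigh_iff]
    simp only [mem_singleton, not_blocked_one, not_false_iff, true_and]
    rw [Fin.ext_iff]
    have : pLast π = 0 := by
      rw [pLast]
      exact Fin.val_eq_zero _
    have := b.isLt
    simp only [Fin.val_one]
    omega
  rw [klab, this, card_singleton]

lemma cnt_zero (h k : ℕ) : cnt 0 h k = if h = 1 ∧ k = 1 then 1 else 0 := by
  rw [cnt]
  by_cases hhk : h = 1 ∧ k = 1
  · rw [if_pos hhk]
    rw [filter_true_of_mem]
    · simp
    · intro π _
      exact ⟨not_contains_one _, by rw [hlab_one]; omega, by rw [klab_one]; omega⟩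
  · rw [if_neg hhk]
    rw [card_eq_zero, filter_eq_empty_iff]
    rintro π _ ⟨_, hh, hk⟩
    rw [hlab_one] at hh
    rw [klab_one] at hk
    exact hhk ⟨hh.symm, hk.symm⟩

lemma cnt_big (N h k : ℕ) (hh : N + 2 < h) : cnt N h k = 0 := by
  rw [cnt, card_eq_zero, filter_eq_empty_iff]
  rintro π _ ⟨_, h1, _⟩
  have := hlab_le π
  omega

lemma cnt_succ (N h k : ℕ) (hh : 1 ≤ h) (hk : 1 ≤ k) :
    cnt (N+1) h k = (∑ h' ∈ Finset.Icc h (N+2), cnt N h' (k-1))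
      + ∑ m ∈ Finset.Ico 1 h, cnt N m (h+k-1-m) := by
  have hSBins : ∀ (π : Equiv.Perm (Fin (N+1))) (a : Fin (N+2)),
      IsSemiBaxter (insertPerm π a) ↔ (IsSemiBaxter π ∧ ¬ Blocked π (a : ℕ)) := by
    intro π a
    rw [IsSemiBaxter, coe_insertPerm, contains_insertFun_iff, IsSemiBaxter]
    tauto
  have prodcard : cnt (N+1) h k
      = (univ.filter fun x : Equiv.Perm (Fin (N+1)) × Fin (N+2) =>
          IsSemiBaxter (insertPerm x.1 x.2) ∧ hlab (insertPerm x.1 x.2) = h ∧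
            klab (insertPerm x.1 x.2) = k).card := by
    rw [cnt]
    apply (Finset.card_bij (fun x _ => insertPerm x.1 x.2) ?_ ?_ ?_).symm
    · intro x hx
      simp only [mem_filter, mem_univ, true_and] at hx ⊢
      exact hx
    · intro x1 h1 x2 h2 heq
      obtain ⟨h3, h4⟩ := insertPerm_inj heq
      exact Prod.ext h3 h4
    · intro σ hσ
      obtain ⟨π, a, rfl⟩ := insertPerm_surjective σ
      exact ⟨(π, a), by simpa using hσ, rfl⟩
  rw [prodcard, card_filter, Fintype.sum_prod_type]
  have inner : ∀ π : Equiv.Perm (Fin (N+1)),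
      (∑ a : Fin (N+2), if (IsSemiBaxter (insertPerm π a) ∧ hlab (insertPerm π a) = h ∧
          klab (insertPerm π a) = k) then 1 else 0)
      = (if (IsSemiBaxter π ∧ klab π = k - 1 ∧ h ≤ hlab π) then 1 else 0)
        + (if (IsSemiBaxter π ∧ hlab π < h ∧ klab π = h + k - 1 - hlab π) then 1 else 0) := by
    intro π
    by_cases hsb : IsSemiBaxter π
    · rw [← card_filter]
      rw [show (univ.filter fun a : Fin (N+2) => IsSemiBaxter (insertPerm π a) ∧
            hlab (insertPerm π a) = h ∧ klab (insertPerm π a) = k)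
          = (univ.filter fun a : Fin (N+2) => ¬ Blocked π (a : ℕ) ∧
            hlab (insertPerm π a) = h ∧ klab (insertPerm π a) = k) from ?_]
      · rw [Dcard π h k hk]
        congr 1
        · refine if_congr ?_ rfl rfl
          constructor
          · rintro ⟨u, v, _⟩; exact ⟨hsb, u, v⟩
          · rintro ⟨_, u, v⟩; exact ⟨u, v, hh⟩
        · refine if_congr ?_ rfl rfl
          constructor
          · rintro ⟨u, v⟩; exact ⟨hsb, u, v⟩
          · rintro ⟨_, u, v⟩; exact ⟨u, v⟩
      · apply filter_congr
        intro a _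
        rw [hSBins]
        tauto
    · rw [if_neg (fun hc => hsb hc.1), if_neg (fun hc => hsb hc.1)]
      apply Finset.sum_eq_zero
      intro a _
      rw [if_neg]
      rintro ⟨hc, _⟩
      exact hsb ((hSBins π a).mp hc).1
  rw [Finset.sum_congr rfl (fun π _ => inner π), Finset.sum_add_distrib]
  congr 1
  · rw [← card_filter]
    have hfib : ∀ π ∈ (univ.filter fun π : Equiv.Perm (Fin (N+1)) =>
        IsSemiBaxter π ∧ klab π = k - 1 ∧ h ≤ hlab π),
        hlab π ∈ Finset.Icc h (N+2) := by
      intro π hπ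
      rw [mem_filter] at hπ
      rw [Finset.mem_Icc]
      exact ⟨hπ.2.2.2, hlab_le π⟩
    rw [Finset.card_eq_sum_card_fiberwise hfib]
    apply Finset.sum_congr rfl
    intro h' hh'
    rw [Finset.mem_Icc] at hh'
    rw [cnt, filter_filter]
    apply congrArg card
    apply filter_congr
    intro π _
    constructor
    · rintro ⟨⟨hs, hk1, _⟩, hl⟩; exact ⟨hs, hl, hk1⟩
    · rintro ⟨hs, hl, hk1⟩; exact ⟨⟨hs, hk1, by omega⟩, hl⟩
  · rw [← card_filter]
    have hfib : ∀ π ∈ (univ.filter fun π : Equiv.Perm (Fin (N+1)) =>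
        IsSemiBaxter π ∧ hlab π < h ∧ klab π = h + k - 1 - hlab π),
        hlab π ∈ Finset.Ico 1 h := by
      intro π hπ
      rw [mem_filter] at hπ
      rw [Finset.mem_Ico]
      exact ⟨hlab_pos π, hπ.2.2.1⟩
    rw [Finset.card_eq_sum_card_fiberwise hfib]
    apply Finset.sum_congr rfl
    intro m hm
    rw [Finset.mem_Ico] at hm
    rw [cnt, filter_filter]
    apply congrArg card
    apply filter_congr
    intro π _
    constructor
    · rintro ⟨⟨hs, _, hk2⟩, hl⟩; exact ⟨hs, hl, by rw [← hl]; exact hk2⟩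
    · rintro ⟨hs, hl, hk2⟩; exact ⟨⟨hs, by omega, by rw [hl]; exact hk2⟩, hl⟩
end

end SB

theorem semiBaxter_omega_semi :
    semiBaxterLabelCount 1 1 1 = 1 ∧
    (∀ h k : ℕ, 1 ≤ h → 1 ≤ k → (h, k) ≠ (1, 1) → semiBaxterLabelCount 1 h k = 0) ∧
    (∀ n h k : ℕ, 1 ≤ n → 1 ≤ h → 1 ≤ k →
      semiBaxterLabelCount (n + 1) h k =
        (∑' h' : ℕ, if h ≤ h' then semiBaxterLabelCount n h' (k - 1) else 0) +
          ∑ m ∈ Finset.Ico 1 h, semiBaxterLabelCount n m (h + k - 1 - m)) := by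
  refine ⟨?_, ?_, ?_⟩
  · exact (SB.sbcount_eq 0 1 1).trans (by rw [SB.cnt_zero]; norm_num)
  · intro h k hh hk hne
    refine (SB.sbcount_eq 0 h k).trans ?_
    rw [SB.cnt_zero, if_neg]
    rintro ⟨rfl, rfl⟩
    exact hne rfl
  · intro n h k hn hh hk
    obtain ⟨m, rfl⟩ : ∃ m, n = m + 1 := ⟨n - 1, by omega⟩
    have hout : ∀ h' ∉ Finset.Icc h (m + 2),
        (if h ≤ h' then semiBaxterLabelCount (m + 1) h' (k - 1) else 0) = 0 := by
      intro h' hh'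
      rw [Finset.mem_Icc] at hh'
      by_cases hcase : h ≤ h'
      · rw [if_pos hcase, SB.sbcount_eq m, SB.cnt_big m _ _ (by omega)]
      · rw [if_neg hcase]
    rw [tsum_eq_sum hout]
    refine (SB.sbcount_eq (m + 1) h k).trans ?_
    rw [SB.cnt_succ m h k hh hk]
    congr 1
    · apply Finset.sum_congr rfl
      intro h' hh'
      rw [Finset.mem_Icc] at hh'
      rw [if_pos hh'.1, SB.sbcount_eq m]
    · apply Finset.sum_congr rfl
      intro m' _
      rw [SB.sbcount_eq m]
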